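/- Write $2e - 2 - 2k = q(n-k-1) + r$ with $0 \le r < n-k-1$, where $n - k$ is odd, $2e \ge 3(n-1)$, and $3k \le n+1$. Define the sequence $c_1, \dots, c_n$ = $(1,1,x_1,1,1,x_2,\dots,1,1,x_k,1,x_{k+1},\dots,x_{(n-k-1)/2},1)$ where $x_1 = \cdots = x_{r/2} = q$ and the remaining $x_i = q-1$. Set $k_0 = e$ and $k_i = k_{i-1} - c_i$. Then $k_{n-1} = 1$, $k_n = 0$, the $k_i$ are strictly decreasing, and among the sums $b_i = c_i + c_{i+1}$ ($1 \le i \le n-1$), exactly $k$ equal $2$, exactly $r$ equal $q+1$, and the remaining $n-1-k-r$ equal $q$. -/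

import Mathlib

theorem sum_Icc_join {M : Type*} [AddCommMonoid M] (f : ℕ → M) {b d : ℕ} (h : b ≤ d) :
    (∑ i ∈ Finset.Icc 1 b, f i) + ∑ i ∈ Finset.Icc (b+1) d, f i = ∑ i ∈ Finset.Icc 1 d, f i := by
  have h1 : ∀ x : ℕ, Finset.Icc 1 x = Finset.Ioc 0 x := fun x => by
    rw [← Finset.Icc_add_one_left_eq_Ioc, zero_add]
  have h2 : Finset.Icc (b+1) d = Finset.Ioc b d := by rw [← Finset.Icc_add_one_left_eq_Ioc]
  rw [h1, h1, h2]
  exact Finset.sum_Ioc_consecutive f (Nat.zero_le b) h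

theorem repl_succ' (n a : ℕ) :
    Multiset.replicate (n+1) a = Multiset.replicate n a + {a} := by
  rw [Multiset.replicate_add, Multiset.replicate_one]

theorem map_val_eq_sum (s : Finset ℕ) (f : ℕ → ℕ) :
    Multiset.map f s.val = ∑ i ∈ s, ({f i} : Multiset ℕ) := by
  classical
  induction s using Finset.induction_on with
  | empty => simp
  | insert a s h ih => simp [Finset.sum_insert h, Multiset.ndinsert_of_notMem h, ih]

/-- Combinatorial verification underlying the monomial-curve construction in the
proof of Proposition 4.4 (goodComp), case `n - k` odd: the exponent sequence `κ`
is strictly decreasing with `κ (n-1) = 1`, `κ n = 0`, and among the consecutive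
sums `bᵢ = cᵢ + cᵢ₊₁` exactly `k` equal `2`, exactly `r` equal `q+1`, and the
remaining `n-1-k-r` equal `q`. -/
theorem stmt_19 (n e k q r : ℕ) (hk : 1 ≤ k) (h3k : 3 * k ≤ n + 1)
    (h2e : 3 * (n - 1) ≤ 2 * e) (hkn : k ≤ n) (hodd : (n - k) % 2 = 1)
    (hr : r < n - k - 1) (hdiv : 2 * e = q * (n - k - 1) + r + 2 + 2 * k)
    (x : ℕ → ℕ) (hx : ∀ l, x l = if l ≤ r / 2 then q else q - 1)
    (c : ℕ → ℕ)
    (hc : ∀ i, c i = if i ≤ 3 * k then (if i % 3 = 0 then x (i / 3) else 1)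
      else (if (i - 3 * k) % 2 = 1 then 1 else x (k + (i - 3 * k) / 2)))
    (κ : ℕ → ℤ) (hκ : ∀ i, κ i = (e : ℤ) - ∑ j ∈ Finset.Icc 1 i, (c j : ℤ)) :
    κ (n - 1) = 1 ∧ κ n = 0 ∧ (∀ i < n, κ (i + 1) < κ i) ∧
      Multiset.map (fun i => c i + c (i + 1)) (Finset.Icc 1 (n - 1)).val =
        Multiset.replicate k 2 + Multiset.replicate r (q + 1) +
          Multiset.replicate (n - 1 - k - r) q := by
  classical
  obtain ⟨m, hm⟩ : ∃ m, n - k = 2*m + 1 := ⟨(n-k)/2, by omega⟩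
  have hn : n = k + 2*m + 1 := by omega
  have hq2 : 2 ≤ q := by
    by_contra hq
    have h1 : q * (n - k - 1) ≤ 1 * (n - k - 1) := Nat.mul_le_mul (by omega) (le_refl _)
    omega
  have hdiv2 : 2 * e = 2 * (q * m) + r + 2 + 2 * k := by
    rw [hdiv, show n - k - 1 = 2 * m by omega]; ring
  obtain ⟨s, hs⟩ : ∃ s, r = 2 * s := ⟨r/2, by omega⟩
  have hsm : s < m := by omega
  have hx1 : ∀ l, l ≤ s → x l = q := by intro l hl; rw [hx, if_pos (by omega)]
  have hx2 : ∀ l, s < l → x l = q - 1 := by intro l hl; rw [hx, if_neg (by omega)]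
  have hkm : k ≤ m + 1 := by omega
  -- values of c
  have hc1 : ∀ t, t < k → c (3*t+1) = 1 := by
    intro t ht; rw [hc, if_pos (by omega), if_neg (by omega)]
  have hc2 : ∀ t, t < k → c (3*t+1+1) = 1 := by
    intro t ht; rw [hc, if_pos (by omega), if_neg (by omega)]
  have hc3 : ∀ t, t < k → c (3*t+1+1+1) = x (t+1) := by
    intro t ht
    rw [hc, if_pos (by omega), if_pos (by omega), show (3*t+1+1+1)/3 = t+1 by omega]
  have hd1 : ∀ u, c (3*k+2*u+1) = 1 := by
    intro u; rw [hc, if_neg (by omega), if_pos (by omega)]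
  have hd2 : ∀ u, c (3*k+2*u+1+1) = x (k+u+1) := by
    intro u
    rw [hc, if_neg (by omega), if_neg (by omega),
      show k + (3*k+2*u+1+1 - 3*k)/2 = k+u+1 by omega]
  have hcpos : ∀ j, 1 ≤ c j := by
    intro j; rw [hc]
    split_ifs with h1 h2 h3
    · rw [hx]; split_ifs <;> omega
    · omega
    · omega
    · rw [hx]; split_ifs <;> omega
  -- partial sums of x
  have hxsum : ∀ t, (∑ l ∈ Finset.Icc 1 t, x l) + t = t * q + min t s := by
    intro t; induction t with
    | zero => simp
    | succ t ih =>
      have e1 : ∑ l ∈ Finset.Icc 1 (t+1), x l = (∑ l ∈ Finset.Icc 1 t, x l) + x (t+1) :=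
        Finset.sum_Icc_succ_top (by omega) x
      have e2 : (t+1) * q = t * q + q := by ring
      rcases le_or_gt (t+1) s with h | h
      · rw [e1, hx1 _ h]; omega
      · rw [e1, hx2 _ h]; omega
  -- partial sums of c : triple part
  have hcsum1 : ∀ t, t ≤ k → ∑ j ∈ Finset.Icc 1 (3*t), c j
      = 2*t + ∑ l ∈ Finset.Icc 1 t, x l := by
    intro t; induction t with
    | zero => intro _; have h0 : Finset.Icc 1 0 = ∅ := Finset.Icc_eq_empty (by omega)
              simp [h0]
    | succ t ih =>
      intro ht
      have e1 : ∑ j ∈ Finset.Icc 1 (3*t+1+1+1), c j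
          = (∑ j ∈ Finset.Icc 1 (3*t+1+1), c j) + c (3*t+1+1+1) :=
        Finset.sum_Icc_succ_top (by omega) c
      have e2 : ∑ j ∈ Finset.Icc 1 (3*t+1+1), c j
          = (∑ j ∈ Finset.Icc 1 (3*t+1), c j) + c (3*t+1+1) :=
        Finset.sum_Icc_succ_top (by omega) c
      have e3 : ∑ j ∈ Finset.Icc 1 (3*t+1), c j
          = (∑ j ∈ Finset.Icc 1 (3*t), c j) + c (3*t+1) :=
        Finset.sum_Icc_succ_top (by omega) c
      have e4 : ∑ l ∈ Finset.Icc 1 (t+1), x l = (∑ l ∈ Finset.Icc 1 t, x l) + x (t+1) :=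
        Finset.sum_Icc_succ_top (by omega) x
      rw [show 3*(t+1) = 3*t+1+1+1 by ring, e1, e2, e3, e4, ih (by omega),
        hc1 t (by omega), hc2 t (by omega), hc3 t (by omega)]
      omega
  -- partial sums of c : tail part
  have hcsum2 : ∀ u, ∑ j ∈ Finset.Icc (3*k+1) (3*k+2*u+1), c j
      = (u+1) + ∑ l ∈ Finset.Icc (k+1) (k+u), x l := by
    intro u; induction u with
    | zero =>
      have h0 : Finset.Icc (k+1) (k+0) = ∅ := Finset.Icc_eq_empty (by omega)
      have h1 := hd1 0
      rw [show 3*k+2*0+1 = 3*k+1 by ring] at h1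
      rw [show 3*k+2*0+1 = 3*k+1 by ring, Finset.Icc_self, Finset.sum_singleton, h1, h0]
      simp
    | succ u ih =>
      have e1 : ∑ j ∈ Finset.Icc (3*k+1) (3*k+2*u+1+1+1), c j
          = (∑ j ∈ Finset.Icc (3*k+1) (3*k+2*u+1+1), c j) + c (3*k+2*u+1+1+1) :=
        Finset.sum_Icc_succ_top (by omega) c
      have e2 : ∑ j ∈ Finset.Icc (3*k+1) (3*k+2*u+1+1), c j
          = (∑ j ∈ Finset.Icc (3*k+1) (3*k+2*u+1), c j) + c (3*k+2*u+1+1) :=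
        Finset.sum_Icc_succ_top (by omega) c
      have e3 : ∑ l ∈ Finset.Icc (k+1) (k+u+1), x l
          = (∑ l ∈ Finset.Icc (k+1) (k+u), x l) + x (k+u+1) :=
        Finset.sum_Icc_succ_top (by omega) x
      have v1 : c (3*k+2*u+1+1+1) = 1 := by
        have := hd1 (u+1); rwa [show 3*k+2*(u+1)+1 = 3*k+2*u+1+1+1 by ring] at this
      rw [show 3*k+2*(u+1)+1 = 3*k+2*u+1+1+1 by ring, e1, e2, ih, hd2 u, v1,
        show k+(u+1) = k+u+1 by ring, e3]
      omega
  -- total sum of c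
  have hx_m := hxsum m
  have hctotal : ∑ j ∈ Finset.Icc 1 n, c j = e := by
    have hb : m * q = q * m := by ring
    rcases le_or_gt k m with hkm' | hkm'
    · have h1 := hcsum1 k le_rfl
      have h2 := hcsum2 (m-k)
      rw [show 3*k+2*(m-k)+1 = n by omega, show k+(m-k) = m by omega] at h2
      have h3 := sum_Icc_join c (show 3*k ≤ n by omega)
      have h4 := sum_Icc_join x (show k ≤ m by omega)
      have h5 := hxsum k
      omega
    · have h1 := hcsum1 m (by omega)
      have e2 : ∑ j ∈ Finset.Icc 1 (3*m+1), c j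
          = (∑ j ∈ Finset.Icc 1 (3*m), c j) + c (3*m+1) :=
        Finset.sum_Icc_succ_top (by omega) c
      have e3 : ∑ j ∈ Finset.Icc 1 (3*m+1+1), c j
          = (∑ j ∈ Finset.Icc 1 (3*m+1), c j) + c (3*m+1+1) :=
        Finset.sum_Icc_succ_top (by omega) c
      have v1 := hc1 m (by omega)
      have v2 := hc2 m (by omega)
      rw [show n = 3*m+1+1 by omega, e3, e2, h1, v1, v2]
      omega
  have hcn : c n = 1 := by
    rw [hc]; split_ifs with h1 h2 h3
    · omega
    · rfl
    · rfl
    · omega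
  have e5 : ∑ j ∈ Finset.Icc 1 n, c j = (∑ j ∈ Finset.Icc 1 (n-1), c j) + c n := by
    have := Finset.sum_Icc_succ_top (show (1:ℕ) ≤ (n-1)+1 by omega) c
    rwa [show (n-1)+1 = n by omega] at this
  have hsn1 : ∑ j ∈ Finset.Icc 1 (n-1), c j = e - 1 := by omega
  have he1 : 1 ≤ e := by omega
  refine ⟨?_, ?_, ?_, ?_⟩
  · rw [hκ, ← Nat.cast_sum, hsn1]; omega
  · rw [hκ, ← Nat.cast_sum, hctotal]; simp
  · intro i hi
    have e6 : ∑ j ∈ Finset.Icc 1 (i+1), (c j : ℤ)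
        = (∑ j ∈ Finset.Icc 1 i, (c j : ℤ)) + (c (i+1) : ℤ) :=
      Finset.sum_Icc_succ_top (by omega) _
    have hp := hcpos (i+1)
    rw [hκ, hκ, e6]
    omega
  · rw [map_val_eq_sum]
    have key1 : ∀ t, t ≤ k → ∑ i ∈ Finset.Icc 1 (3*t), ({c i + c (i+1)} : Multiset ℕ)
        = Multiset.replicate t 2
          + ∑ l ∈ Finset.Icc 1 t, ({x l + 1} + {x l + 1} : Multiset ℕ) := by
      intro t; induction t with
      | zero => intro _; have h0 : Finset.Icc 1 0 = ∅ := Finset.Icc_eq_empty (by omega)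
                simp [h0]
      | succ t ih =>
        intro ht
        have e1 : ∑ i ∈ Finset.Icc 1 (3*t+1+1+1), ({c i + c (i+1)} : Multiset ℕ)
            = (∑ i ∈ Finset.Icc 1 (3*t+1+1), ({c i + c (i+1)} : Multiset ℕ))
              + {c (3*t+1+1+1) + c (3*t+1+1+1+1)} :=
          Finset.sum_Icc_succ_top (by omega) _
        have e2 : ∑ i ∈ Finset.Icc 1 (3*t+1+1), ({c i + c (i+1)} : Multiset ℕ)
            = (∑ i ∈ Finset.Icc 1 (3*t+1), ({c i + c (i+1)} : Multiset ℕ))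
              + {c (3*t+1+1) + c (3*t+1+1+1)} :=
          Finset.sum_Icc_succ_top (by omega) _
        have e3 : ∑ i ∈ Finset.Icc 1 (3*t+1), ({c i + c (i+1)} : Multiset ℕ)
            = (∑ i ∈ Finset.Icc 1 (3*t), ({c i + c (i+1)} : Multiset ℕ))
              + {c (3*t+1) + c (3*t+1+1)} :=
          Finset.sum_Icc_succ_top (by omega) _
        have e4 : ∑ l ∈ Finset.Icc 1 (t+1), ({x l + 1} + {x l + 1} : Multiset ℕ)
            = (∑ l ∈ Finset.Icc 1 t, ({x l + 1} + {x l + 1} : Multiset ℕ))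
              + ({x (t+1) + 1} + {x (t+1) + 1}) :=
          Finset.sum_Icc_succ_top (by omega) _
        have v4 : c (3*t+1+1+1+1) = 1 := by
          rcases eq_or_lt_of_le ht with hk' | hk'
          · have := hd1 0
            rwa [show 3*k+2*0+1 = 3*t+1+1+1+1 by omega] at this
          · have := hc1 (t+1) (by omega)
            rwa [show 3*(t+1)+1 = 3*t+1+1+1+1 by ring] at this
        have w1 : ({c (3*t+1) + c (3*t+1+1)} : Multiset ℕ) = {2} := by
          rw [hc1 t (by omega), hc2 t (by omega)]
        have w2 : ({c (3*t+1+1) + c (3*t+1+1+1)} : Multiset ℕ) = {x (t+1) + 1} := by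
          rw [hc2 t (by omega), hc3 t (by omega), Nat.add_comm]
        have w3 : ({c (3*t+1+1+1) + c (3*t+1+1+1+1)} : Multiset ℕ) = {x (t+1) + 1} := by
          rw [hc3 t (by omega), v4]
        rw [show 3*(t+1) = 3*t+1+1+1 by ring, e1, e2, e3, w1, w2, w3, ih (by omega), e4,
          repl_succ']
        abel
    have key2 : ∀ u, ∑ i ∈ Finset.Icc (3*k+1) (3*k+2*u), ({c i + c (i+1)} : Multiset ℕ)
        = ∑ l ∈ Finset.Icc (k+1) (k+u), ({x l + 1} + {x l + 1} : Multiset ℕ) := by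
      intro u; induction u with
      | zero =>
        have h0 : Finset.Icc (3*k+1) (3*k+2*0) = ∅ := Finset.Icc_eq_empty (by omega)
        have h1 : Finset.Icc (k+1) (k+0) = ∅ := Finset.Icc_eq_empty (by omega)
        rw [h0, h1]
        simp
      | succ u ih =>
        have e1 : ∑ i ∈ Finset.Icc (3*k+1) (3*k+2*u+1+1), ({c i + c (i+1)} : Multiset ℕ)
            = (∑ i ∈ Finset.Icc (3*k+1) (3*k+2*u+1), ({c i + c (i+1)} : Multiset ℕ))
              + {c (3*k+2*u+1+1) + c (3*k+2*u+1+1+1)} :=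
          Finset.sum_Icc_succ_top (by omega) _
        have e2 : ∑ i ∈ Finset.Icc (3*k+1) (3*k+2*u+1), ({c i + c (i+1)} : Multiset ℕ)
            = (∑ i ∈ Finset.Icc (3*k+1) (3*k+2*u), ({c i + c (i+1)} : Multiset ℕ))
              + {c (3*k+2*u+1) + c (3*k+2*u+1+1)} :=
          Finset.sum_Icc_succ_top (by omega) _
        have e3 : ∑ l ∈ Finset.Icc (k+1) (k+u+1), ({x l + 1} + {x l + 1} : Multiset ℕ)
            = (∑ l ∈ Finset.Icc (k+1) (k+u), ({x l + 1} + {x l + 1} : Multiset ℕ))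
              + ({x (k+u+1) + 1} + {x (k+u+1) + 1}) :=
          Finset.sum_Icc_succ_top (by omega) _
        have w1 : ({c (3*k+2*u+1) + c (3*k+2*u+1+1)} : Multiset ℕ) = {x (k+u+1) + 1} := by
          rw [hd1 u, hd2 u, Nat.add_comm]
        have w2 : ({c (3*k+2*u+1+1) + c (3*k+2*u+1+1+1)} : Multiset ℕ) = {x (k+u+1) + 1} := by
          have := hd1 (u+1)
          rw [show 3*k+2*(u+1)+1 = 3*k+2*u+1+1+1 by ring] at this
          rw [hd2 u, this]
        rw [show 3*k+2*(u+1) = 3*k+2*u+1+1 by ring, e1, e2, ih, w1, w2,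
          show k+(u+1) = k+u+1 by ring, e3]
        abel
    have key3 : ∀ t, ∑ l ∈ Finset.Icc 1 t, ({x l + 1} + {x l + 1} : Multiset ℕ)
        = Multiset.replicate (2 * min t s) (q+1) + Multiset.replicate (2*t - 2 * min t s) q := by
      intro t; induction t with
      | zero => have h0 : Finset.Icc 1 0 = ∅ := Finset.Icc_eq_empty (by omega)
                simp [h0]
      | succ t ih =>
        have e1 : ∑ l ∈ Finset.Icc 1 (t+1), ({x l + 1} + {x l + 1} : Multiset ℕ)
            = (∑ l ∈ Finset.Icc 1 t, ({x l + 1} + {x l + 1} : Multiset ℕ))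
              + ({x (t+1) + 1} + {x (t+1) + 1}) :=
          Finset.sum_Icc_succ_top (by omega) _
        rcases le_or_gt (t+1) s with h | h
        · rw [e1, ih, hx1 _ h, min_eq_left (show t ≤ s by omega),
            min_eq_left (show t+1 ≤ s by omega),
            show 2*t - 2*t = 0 by omega, show 2*(t+1) - 2*(t+1) = 0 by omega,
            show 2*(t+1) = 2*t+1+1 by ring, repl_succ', repl_succ']
          abel
        · rw [e1, ih, hx2 _ h, min_eq_right (show s ≤ t by omega),
            min_eq_right (show s ≤ t+1 by omega),
            show q - 1 + 1 = q by omega,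
            show 2*(t+1) - 2*s = (2*t - 2*s)+1+1 by omega, repl_succ', repl_succ']
          abel
    have hminm : min m s = s := by omega
    rcases le_or_gt k m with hkm' | hkm'
    · have h1 := key1 k le_rfl
      have h2 := key2 (m-k)
      rw [show 3*k+2*(m-k) = n-1 by omega, show k+(m-k) = m by omega] at h2
      have h3 := sum_Icc_join (fun i => ({c i + c (i+1)} : Multiset ℕ))
        (show 3*k ≤ n-1 by omega)
      have h4 := sum_Icc_join (fun l => ({x l + 1} + {x l + 1} : Multiset ℕ))
        (show k ≤ m by omega)
      have h5 := key3 m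
      rw [hminm] at h5
      rw [← h3, h1, h2, add_assoc, h4, h5, hs,
        show n-1-k-(2*s) = 2*m - 2*s by omega, add_assoc]
    · have h1 := key1 m (by omega)
      have e1 : ∑ i ∈ Finset.Icc 1 (3*m+1), ({c i + c (i+1)} : Multiset ℕ)
          = (∑ i ∈ Finset.Icc 1 (3*m), ({c i + c (i+1)} : Multiset ℕ))
            + {c (3*m+1) + c (3*m+1+1)} :=
        Finset.sum_Icc_succ_top (by omega) _
      have w1 : ({c (3*m+1) + c (3*m+1+1)} : Multiset ℕ) = {2} := by
        rw [hc1 m (by omega), hc2 m (by omega)]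
      have h5 := key3 m
      rw [hminm] at h5
      rw [show n-1 = 3*m+1 by omega, e1, h1, w1, h5, hs,
        show 3*m+1-k-(2*s) = 2*m - 2*s by omega, show k = m+1 by omega, repl_succ']
      abel
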